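/- Let H be a 3-uniform hypergraph on n vertices with m edges. The number of unordered pairs of distinct edges of H sharing exactly one vertex is at least (1/2)·(3(n-3)(n-4)/2 · m²/C(n,3) - (2n-11)·(m - m²/C(n,3))), provided n ≥ 7. -/

import Mathlib

open Finset

lemma mulind (P Q : Prop) [Decidable P] [Decidable Q] :
    (if P then (1:ℝ) else 0) * (if Q then 1 else 0) = if P ∧ Q then 1 else 0 := by
  split_ifs <;> simp_all

lemma sum_comm3 {β γ δ : Type*} (s : Finset β) (t : Finset γ) (u : Finset δ) (f : β → γ → δ → ℝ) :
    ∑ p ∈ s, ∑ q ∈ t, ∑ v ∈ u, f p q v = ∑ v ∈ u, ∑ p ∈ s, ∑ q ∈ t, f p q v :=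
  calc ∑ p ∈ s, ∑ q ∈ t, ∑ v ∈ u, f p q v
      = ∑ p ∈ s, ∑ v ∈ u, ∑ q ∈ t, f p q v := Finset.sum_congr rfl fun p _ => Finset.sum_comm
    _ = ∑ v ∈ u, ∑ p ∈ s, ∑ q ∈ t, f p q v := Finset.sum_comm

section
variable {α : Type*} [DecidableEq α]


/-- number of (k+1)-subsets of s containing a fixed v ∈ s -/
lemma count_mem_pc (s : Finset α) (v : α) (hv : v ∈ s) (k : ℕ) :
    ((Finset.powersetCard (k+1) s).filter (fun e => v ∈ e)).card = (s.card - 1).choose k := by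
  have h1 : (Finset.powersetCard (k+1) s).filter (fun e => v ∉ e)
      = Finset.powersetCard (k+1) (s.erase v) := by
    ext e
    simp only [mem_filter, mem_powersetCard, subset_erase]
    tauto
  have h2 := Finset.card_filter_add_card_filter_not
    (s := Finset.powersetCard (k+1) s) (p := fun e => v ∈ e)
  rw [h1] at h2
  simp only [card_powersetCard, card_erase_of_mem hv] at h2
  obtain ⟨c, hc⟩ : ∃ c, s.card = c + 1 := ⟨s.card - 1, by
    have := Finset.card_pos.2 ⟨v, hv⟩; omega⟩
  rw [hc] at h2 ⊢
  simp only [Nat.add_sub_cancel] at h2 ⊢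
  rw [Nat.choose_succ_succ c k, Nat.succ_eq_add_one] at h2
  omega

/-- number of 3-subsets of s containing two fixed distinct elements -/
lemma count_two_pc (s : Finset α) (v w : α) (hv : v ∈ s) (hw : w ∈ s) (hvw : v ≠ w) :
    ((Finset.powersetCard 3 s).filter (fun e => v ∈ e ∧ w ∈ e)).card = s.card - 2 := by
  have h2 := Finset.card_filter_add_card_filter_not
    (s := (Finset.powersetCard 3 s).filter (fun e => w ∈ e)) (p := fun e => v ∈ e)
  rw [filter_filter, filter_filter] at h2
  have hA : ((Finset.powersetCard 3 s).filter (fun e => w ∈ e ∧ v ∉ e))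
      = (Finset.powersetCard 3 (s.erase v)).filter (fun e => w ∈ e) := by
    ext e
    simp only [mem_filter, mem_powersetCard, subset_erase]
    tauto
  have hB : ((Finset.powersetCard 3 s).filter (fun e => w ∈ e ∧ v ∈ e))
      = ((Finset.powersetCard 3 s).filter (fun e => v ∈ e ∧ w ∈ e)) := by
    apply filter_congr; intro e _; simp [and_comm]
  rw [hA, hB] at h2
  have hc1 := count_mem_pc s w hw 2
  have hc2 := count_mem_pc (s.erase v) w (Finset.mem_erase.2 ⟨Ne.symm hvw, hw⟩) 2
  have hcount := count_mem_pc s w hw 2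
  rw [hc2, card_erase_of_mem hv] at h2
  rw [hc1] at h2
  -- h2 : target + (s.card - 1 - 1).choose 2 = (s.card - 1).choose 2
  have hs2 : 2 ≤ s.card := Finset.one_lt_card.2 ⟨v, hv, w, hw, hvw⟩
  obtain ⟨c, hc⟩ : ∃ c, s.card = c + 2 := ⟨s.card - 2, by omega⟩
  rw [hc] at h2 ⊢
  have e1 : c + 2 - 1 - 1 = c := by omega
  have e2 : c + 2 - 1 = c + 1 := by omega
  rw [e1, e2] at h2
  have h3 : (c+1).choose 2 = c.choose 1 + c.choose 2 := Nat.choose_succ_succ c 1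
  have h4 : c.choose 1 = c := Nat.choose_one_right c
  omega

lemma count_three_pc (s t : Finset α) (ht : t ⊆ s) (htc : t.card = 3) :
    (Finset.powersetCard 3 s).filter (fun e => t ⊆ e) = {t} := by
  ext e
  simp only [mem_filter, mem_powersetCard, mem_singleton]
  constructor
  · rintro ⟨⟨hes, hec⟩, hte⟩
    exact (Finset.eq_of_subset_of_card_le hte (by omega)).symm
  · rintro rfl
    exact ⟨⟨ht, htc⟩, subset_rfl⟩

lemma count_big_pc (s t : Finset α) (htc : 3 < t.card) :
    (Finset.powersetCard 3 s).filter (fun e => t ⊆ e) = ∅ := by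
  ext e
  simp only [mem_filter, mem_powersetCard, notMem_empty, iff_false, not_and]
  rintro ⟨hes, hec⟩ hte
  have := Finset.card_le_card hte
  omega

end section

section
variable {n : ℕ} (H : Finset (Finset (Fin n)))

noncomputable def yF (v : Fin n) : ℝ := ∑ e ∈ H, if v ∈ e then 1 else 0

noncomputable def zF (p : Finset (Fin n)) : ℝ := ∑ e ∈ H, if p ⊆ e then 1 else 0

lemma ind_card (e : Finset (Fin n)) :
    ∑ v : Fin n, (if v ∈ e then (1:ℝ) else 0) = (e.card : ℝ) := by
  rw [Finset.sum_ite_mem, univ_inter, Finset.sum_const, nsmul_eq_mul, mul_one]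

lemma ind_card2 (s : Finset (Fin n)) :
    ∑ p ∈ Finset.powersetCard 2 (univ : Finset (Fin n)), (if p ⊆ s then (1:ℝ) else 0)
      = ((s.card.choose 2 : ℕ) : ℝ) := by
  rw [Finset.sum_boole]
  congr 1
  have : (Finset.powersetCard 2 (univ : Finset (Fin n))).filter (fun p => p ⊆ s)
      = Finset.powersetCard 2 s := by
    ext p
    simp only [mem_filter, mem_powersetCard, subset_univ, true_and]
    tauto
  rw [this, card_powersetCard]

lemma ysumF (hcard : ∀ e ∈ H, e.card = 3) : ∑ v : Fin n, yF H v = 3 * H.card := by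
  unfold yF
  rw [Finset.sum_comm]
  rw [Finset.sum_congr rfl (fun e he => by rw [ind_card, hcard e he])]
  rw [Finset.sum_const, nsmul_eq_mul]
  push_cast; ring

lemma zsumF (hcard : ∀ e ∈ H, e.card = 3) :
    ∑ p ∈ Finset.powersetCard 2 (univ : Finset (Fin n)), zF H p = 3 * H.card := by
  unfold zF
  rw [Finset.sum_comm]
  rw [Finset.sum_congr rfl (fun e he => by rw [ind_card2, hcard e he])]
  rw [Finset.sum_const, nsmul_eq_mul, show Nat.choose 3 2 = 3 from rfl]
  push_cast; ring



lemma fiber_sum (hcard : ∀ e ∈ H, e.card = 3) (g : ℕ → ℝ) :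
    ∑ q ∈ H ×ˢ H, g ((q.1 ∩ q.2).card) =
      g 0 * ((H ×ˢ H).filter (fun q => (q.1 ∩ q.2).card = 0)).card
      + g 1 * ((H ×ˢ H).filter (fun q => (q.1 ∩ q.2).card = 1)).card
      + g 2 * ((H ×ˢ H).filter (fun q => (q.1 ∩ q.2).card = 2)).card
      + g 3 * H.card := by
  have hmaps : ∀ q ∈ H ×ˢ H, (q.1 ∩ q.2).card ∈ Finset.range 4 := by
    intro q hq
    rw [mem_product] at hq
    have h1 : (q.1 ∩ q.2).card ≤ q.1.card := card_le_card inter_subset_left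
    rw [hcard q.1 hq.1] at h1
    rw [Finset.mem_range]; omega
  rw [← Finset.sum_fiberwise_of_maps_to hmaps (fun q => g ((q.1 ∩ q.2).card))]
  have hfib : ∀ k, ∑ q ∈ (H ×ˢ H).filter (fun q => (q.1 ∩ q.2).card = k),
      g ((q.1 ∩ q.2).card) = g k * ((H ×ˢ H).filter (fun q => (q.1 ∩ q.2).card = k)).card := by
    intro k
    rw [Finset.sum_congr rfl (fun q hq => by rw [(Finset.mem_filter.1 hq).2]),
      Finset.sum_const, nsmul_eq_mul, mul_comm]
  have hdiag : (H ×ˢ H).filter (fun q => (q.1 ∩ q.2).card = 3) = H.diag := by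
    ext q
    simp only [mem_filter, mem_product, Finset.mem_diag]
    constructor
    · rintro ⟨⟨h1, h2⟩, h3⟩
      refine ⟨h1, ?_⟩
      have e1 : q.1 ∩ q.2 = q.1 :=
        Finset.eq_of_subset_of_card_le inter_subset_left (by rw [hcard q.1 h1, h3])
      have e2 : q.1 ∩ q.2 = q.2 :=
        Finset.eq_of_subset_of_card_le inter_subset_right (by rw [hcard q.2 h2, h3])
      rw [← e1, e2]
    · rintro ⟨h1, h2⟩
      refine ⟨⟨h1, h2 ▸ h1⟩, ?_⟩
      rw [← h2, inter_self, hcard q.1 h1]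
  show ∑ k ∈ Finset.range 4, _ = _
  rw [Finset.sum_range_succ, Finset.sum_range_succ, Finset.sum_range_succ,
    Finset.sum_range_succ, Finset.sum_range_zero, hfib 0, hfib 1, hfib 2, hfib 3, hdiag,
    Finset.diag_card]
  ring


end

section
variable {n : ℕ} (H : Finset (Finset (Fin n)))

lemma Ylem : ∑ v : Fin n, (yF H v)^2 = ∑ q ∈ H ×ˢ H, ((q.1 ∩ q.2).card : ℝ) := by
  rw [Finset.sum_product]
  unfold yF
  simp_rw [sq, Finset.sum_mul_sum]
  rw [Finset.sum_comm]
  refine Finset.sum_congr rfl (fun e _ => ?_)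
  rw [Finset.sum_comm]
  refine Finset.sum_congr rfl (fun f _ => ?_)
  simp_rw [mulind, ← Finset.mem_inter]
  exact ind_card _

lemma Zlem : ∑ p ∈ Finset.powersetCard 2 (univ : Finset (Fin n)), (zF H p)^2
    = ∑ q ∈ H ×ˢ H, (((q.1 ∩ q.2).card.choose 2 : ℕ) : ℝ) := by
  rw [Finset.sum_product]
  unfold zF
  simp_rw [sq, Finset.sum_mul_sum]
  rw [Finset.sum_comm]
  refine Finset.sum_congr rfl (fun e _ => ?_)
  rw [Finset.sum_comm]
  refine Finset.sum_congr rfl (fun f _ => ?_)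
  simp_rw [mulind, ← Finset.subset_inter_iff]
  exact ind_card2 _

lemma K6 (hcard : ∀ e ∈ H, e.card = 3) (v : Fin n) :
    ∑ p ∈ Finset.powersetCard 2 (univ : Finset (Fin n)),
      (if v ∈ p then (1:ℝ) else 0) * zF H p = 2 * yF H v := by
  unfold zF
  simp_rw [Finset.mul_sum]
  rw [Finset.sum_comm]
  have hinner : ∀ e ∈ H, ∑ p ∈ Finset.powersetCard 2 (univ : Finset (Fin n)),
      (if v ∈ p then (1:ℝ) else 0) * (if p ⊆ e then 1 else 0)
      = (if v ∈ e then (2:ℝ) else 0) := by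
    intro e he
    simp_rw [mulind]
    rw [Finset.sum_boole]
    by_cases hve : v ∈ e
    · have hfil : (Finset.powersetCard 2 (univ : Finset (Fin n))).filter
          (fun p => v ∈ p ∧ p ⊆ e) = (Finset.powersetCard 2 e).filter (fun p => v ∈ p) := by
        ext p
        simp only [mem_filter, mem_powersetCard, subset_univ, true_and]
        tauto
      rw [hfil, count_mem_pc e v hve 1, hcard e he, if_pos hve]
      norm_num
    · have hfil : (Finset.powersetCard 2 (univ : Finset (Fin n))).filter
          (fun p => v ∈ p ∧ p ⊆ e) = ∅ := by
        ext p
        simp only [mem_filter, mem_powersetCard, subset_univ, true_and, notMem_empty, iff_false,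
          not_and]
        intro h1 h2 h3
        exact hve (h3 h2)
      rw [hfil, if_neg hve]
      simp
  rw [Finset.sum_congr rfl hinner]
  unfold yF
  rw [Finset.mul_sum]
  refine Finset.sum_congr rfl (fun e _ => ?_)
  split_ifs <;> norm_num

lemma Wlem (hcard : ∀ e ∈ H, e.card = 3) :
    ∑ p ∈ Finset.powersetCard 2 (univ : Finset (Fin n)),
      ∑ q ∈ Finset.powersetCard 2 (univ : Finset (Fin n)),
        zF H p * zF H q * ((p ∩ q).card : ℝ)
      = 4 * ∑ v : Fin n, (yF H v)^2 := by
  have h1 : ∀ p q : Finset (Fin n), ((p ∩ q).card : ℝ)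
      = ∑ v : Fin n, (if v ∈ p then (1:ℝ) else 0) * (if v ∈ q then 1 else 0) := by
    intro p q
    simp_rw [mulind, ← Finset.mem_inter]
    rw [ind_card]
  simp_rw [h1, Finset.mul_sum]
  rw [sum_comm3]
  refine Finset.sum_congr rfl (fun v _ => ?_)
  have h2 : ∑ p ∈ Finset.powersetCard 2 (univ : Finset (Fin n)),
      ∑ q ∈ Finset.powersetCard 2 (univ : Finset (Fin n)),
        zF H p * zF H q * ((if v ∈ p then (1:ℝ) else 0) * (if v ∈ q then 1 else 0))
      = (∑ p ∈ Finset.powersetCard 2 (univ : Finset (Fin n)),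
          (if v ∈ p then (1:ℝ) else 0) * zF H p) ^ 2 := by
    rw [sq, Finset.sum_mul_sum]
    exact Finset.sum_congr rfl (fun p _ => Finset.sum_congr rfl (fun q _ => by ring))
  rw [h2, K6 H hcard v]
  ring


lemma diag_sum {β : Type*} [DecidableEq β] (s : Finset β) (f : β → ℝ) (c : ℝ) :
    ∑ p ∈ s, ∑ q ∈ s, f p * f q * (if p = q then c else 0) = c * ∑ p ∈ s, (f p)^2 := by
  rw [Finset.mul_sum]
  refine Finset.sum_congr rfl fun p hp => ?_
  simp only [mul_ite, mul_zero, Finset.sum_ite_eq, hp, if_true]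
  ring

lemma card_univ_fin : (univ : Finset (Fin n)).card = n := by simp

lemma countV1 (v : Fin n) (hn : 7 ≤ n) :
    ((Finset.powersetCard 3 (univ : Finset (Fin n))).filter (fun e => v ∈ e)).card
      = (n-1).choose 2 := by
  rw [count_mem_pc univ v (mem_univ v) 2, card_univ_fin]

lemma countP (hn : 7 ≤ n) (p : Finset (Fin n)) (hp : p.card = 2) :
    ((Finset.powersetCard 3 (univ : Finset (Fin n))).filter (fun e => p ⊆ e)).card = n - 2 := by
  obtain ⟨a, b, hab, rfl⟩ := Finset.card_eq_two.1 hp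
  have hiff : (Finset.powersetCard 3 (univ : Finset (Fin n))).filter
      (fun e => ({a, b} : Finset (Fin n)) ⊆ e)
      = (Finset.powersetCard 3 (univ : Finset (Fin n))).filter (fun e => a ∈ e ∧ b ∈ e) := by
    ext e
    simp [Finset.insert_subset_iff]
  rw [hiff, count_two_pc univ a b (mem_univ a) (mem_univ b) hab, card_univ_fin]

lemma countVP (hn : 7 ≤ n) (v : Fin n) (p : Finset (Fin n)) (hp : p.card = 2) :
    ((Finset.powersetCard 3 (univ : Finset (Fin n))).filter (fun e => v ∈ e ∧ p ⊆ e)).card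
      = if v ∈ p then n - 2 else 1 := by
  by_cases hv : v ∈ p
  · rw [if_pos hv]
    have hiff : (Finset.powersetCard 3 (univ : Finset (Fin n))).filter (fun e => v ∈ e ∧ p ⊆ e)
        = (Finset.powersetCard 3 (univ : Finset (Fin n))).filter (fun e => p ⊆ e) := by
      ext e
      simp only [mem_filter, and_congr_right_iff]
      intro _
      constructor
      · tauto
      · intro h; exact ⟨h hv, h⟩
    rw [hiff, countP hn p hp]
  · rw [if_neg hv]
    have hiff : (Finset.powersetCard 3 (univ : Finset (Fin n))).filter (fun e => v ∈ e ∧ p ⊆ e)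
        = (Finset.powersetCard 3 (univ : Finset (Fin n))).filter (fun e => insert v p ⊆ e) := by
      ext e
      simp [Finset.insert_subset_iff]
    rw [hiff, count_three_pc univ (insert v p) (subset_univ _)
      (by rw [Finset.card_insert_of_notMem hv, hp]), card_singleton]

lemma countPQ (hn : 7 ≤ n) (p q : Finset (Fin n)) (hp : p.card = 2) (hq : q.card = 2)
    (hpq : p ≠ q) :
    ((Finset.powersetCard 3 (univ : Finset (Fin n))).filter (fun e => p ⊆ e ∧ q ⊆ e)).card
      = if (p ∩ q).card = 1 then 1 else 0 := by
  have hiff : (Finset.powersetCard 3 (univ : Finset (Fin n))).filter (fun e => p ⊆ e ∧ q ⊆ e)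
      = (Finset.powersetCard 3 (univ : Finset (Fin n))).filter (fun e => p ∪ q ⊆ e) := by
    ext e
    simp [Finset.union_subset_iff]
  have hu : (p ∪ q).card + (p ∩ q).card = 4 := by
    rw [Finset.card_union_add_card_inter, hp, hq]
  have hile : (p ∩ q).card ≤ 2 := hp ▸ Finset.card_le_card inter_subset_left
  have hne2 : (p ∩ q).card ≠ 2 := by
    intro h2
    have e1 : p ∩ q = p := Finset.eq_of_subset_of_card_le inter_subset_left (by omega)
    have e2 : p ∩ q = q := Finset.eq_of_subset_of_card_le inter_subset_right (by omega)
    exact hpq (e1 ▸ e2)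
  rcases Nat.lt_or_ge (p ∩ q).card 1 with h0 | h1
  · have h0' : (p ∩ q).card = 0 := by omega
    rw [if_neg (by omega), hiff, count_big_pc univ (p ∪ q) (by omega), card_empty]
  · have h1' : (p ∩ q).card = 1 := by omega
    rw [if_pos h1', hiff, count_three_pc univ (p ∪ q) (subset_univ _) (by omega), card_singleton]

noncomputable def xF (e : Finset (Fin n)) : ℝ := if e ∈ H then 1 else 0

noncomputable def zsF (e : Finset (Fin n)) : ℝ :=
  ∑ p ∈ Finset.powersetCard 2 (univ : Finset (Fin n)), (if p ⊆ e then (1:ℝ) else 0) * zF H p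

noncomputable def ysF (e : Finset (Fin n)) : ℝ :=
  ∑ v : Fin n, (if v ∈ e then (1:ℝ) else 0) * yF H v

lemma HsubT3 (hcard : ∀ e ∈ H, e.card = 3) :
    H ⊆ Finset.powersetCard 3 (univ : Finset (Fin n)) := by
  intro e he
  rw [mem_powersetCard]
  exact ⟨subset_univ e, hcard e he⟩

lemma sum_xF (hcard : ∀ e ∈ H, e.card = 3) :
    ∑ e ∈ Finset.powersetCard 3 (univ : Finset (Fin n)), xF H e = H.card := by
  unfold xF
  rw [Finset.sum_boole]
  congr 1
  rw [Finset.filter_mem_eq_inter, Finset.inter_eq_right.2 (HsubT3 H hcard)]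

lemma sum_xF_restrict (hcard : ∀ e ∈ H, e.card = 3) (f : Finset (Fin n) → ℝ) :
    ∑ e ∈ Finset.powersetCard 3 (univ : Finset (Fin n)), xF H e * f e = ∑ e ∈ H, f e := by
  unfold xF
  simp_rw [ite_mul, one_mul, zero_mul]
  rw [Finset.sum_ite_mem, Finset.inter_eq_right.2 (HsubT3 H hcard)]

lemma sum_x_zs (hcard : ∀ e ∈ H, e.card = 3) :
    ∑ e ∈ Finset.powersetCard 3 (univ : Finset (Fin n)), xF H e * zsF H e
      = ∑ p ∈ Finset.powersetCard 2 (univ : Finset (Fin n)), (zF H p)^2 := by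
  rw [sum_xF_restrict H hcard]
  unfold zsF
  rw [Finset.sum_comm]
  refine Finset.sum_congr rfl fun p _ => ?_
  rw [← Finset.sum_mul, sq]
  congr 1

lemma sum_x_ys (hcard : ∀ e ∈ H, e.card = 3) :
    ∑ e ∈ Finset.powersetCard 3 (univ : Finset (Fin n)), xF H e * ysF H e
      = ∑ v : Fin n, (yF H v)^2 := by
  rw [sum_xF_restrict H hcard]
  unfold ysF
  rw [Finset.sum_comm]
  refine Finset.sum_congr rfl fun v _ => ?_
  rw [← Finset.sum_mul, sq]
  congr 1

lemma sum_zs (hn : 7 ≤ n) (hcard : ∀ e ∈ H, e.card = 3) :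
    ∑ e ∈ Finset.powersetCard 3 (univ : Finset (Fin n)), zsF H e
      = ((n - 2 : ℕ) : ℝ) * (3 * H.card) := by
  unfold zsF
  rw [Finset.sum_comm]
  have h1 : ∀ p ∈ Finset.powersetCard 2 (univ : Finset (Fin n)),
      ∑ e ∈ Finset.powersetCard 3 (univ : Finset (Fin n)),
        (if p ⊆ e then (1:ℝ) else 0) * zF H p = ((n - 2 : ℕ) : ℝ) * zF H p := by
    intro p hp
    rw [← Finset.sum_mul, Finset.sum_boole, countP hn p (Finset.mem_powersetCard.1 hp).2]
  rw [Finset.sum_congr rfl h1, ← Finset.mul_sum, zsumF H hcard]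

lemma sum_ys (hn : 7 ≤ n) (hcard : ∀ e ∈ H, e.card = 3) :
    ∑ e ∈ Finset.powersetCard 3 (univ : Finset (Fin n)), ysF H e
      = (((n-1).choose 2 : ℕ) : ℝ) * (3 * H.card) := by
  unfold ysF
  rw [Finset.sum_comm]
  have h1 : ∀ v : Fin n, ∑ e ∈ Finset.powersetCard 3 (univ : Finset (Fin n)),
      (if v ∈ e then (1:ℝ) else 0) * yF H v = (((n-1).choose 2 : ℕ) : ℝ) * yF H v := by
    intro v
    rw [← Finset.sum_mul, Finset.sum_boole, countV1 v hn]
  rw [Finset.sum_congr rfl (fun v _ => h1 v), ← Finset.mul_sum, ysumF H hcard]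

lemma sum_zs_sq (hn : 7 ≤ n) (hcard : ∀ e ∈ H, e.card = 3) :
    ∑ e ∈ Finset.powersetCard 3 (univ : Finset (Fin n)), (zsF H e)^2
      = ((n - 2 : ℕ) : ℝ) * (∑ p ∈ Finset.powersetCard 2 (univ : Finset (Fin n)), (zF H p)^2)
        + (4 * (∑ v : Fin n, (yF H v)^2)
           - 2 * (∑ p ∈ Finset.powersetCard 2 (univ : Finset (Fin n)), (zF H p)^2)) := by
  unfold zsF
  simp_rw [sq, Finset.sum_mul_sum]
  rw [← sum_comm3]
  have hre : ∀ p q e : Finset (Fin n),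
      ((if p ⊆ e then (1:ℝ) else 0) * zF H p) * ((if q ⊆ e then (1:ℝ) else 0) * zF H q)
      = zF H p * zF H q * ((if p ⊆ e then (1:ℝ) else 0) * (if q ⊆ e then 1 else 0)) := by
    intro p q e; ring
  simp_rw [hre, mulind, ← Finset.mul_sum, Finset.sum_boole]
  have hsplit : ∀ p ∈ Finset.powersetCard 2 (univ : Finset (Fin n)),
      ∀ q ∈ Finset.powersetCard 2 (univ : Finset (Fin n)),
      ((((Finset.powersetCard 3 (univ : Finset (Fin n))).filter
          (fun e => p ⊆ e ∧ q ⊆ e)).card : ℕ) : ℝ)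
      = (if p = q then ((n - 2 : ℕ) : ℝ) else 0) + (if (p ∩ q).card = 1 then (1:ℝ) else 0) := by
    intro p hp q hq
    have hp2 : p.card = 2 := (Finset.mem_powersetCard.1 hp).2
    have hq2 : q.card = 2 := (Finset.mem_powersetCard.1 hq).2
    by_cases hpq : p = q
    · subst hpq
      have h1 : ∀ e : Finset (Fin n), (p ⊆ e ∧ p ⊆ e) ↔ p ⊆ e := fun e => and_self_iff
      have : ((Finset.powersetCard 3 (univ : Finset (Fin n))).filter
          (fun e => p ⊆ e ∧ p ⊆ e)) = ((Finset.powersetCard 3 (univ : Finset (Fin n))).filter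
          (fun e => p ⊆ e)) := by
        apply Finset.filter_congr; intro e _; simp
      rw [this, countP hn p hp2, if_pos rfl, if_neg (by rw [Finset.inter_self, hp2]; omega)]
      ring
    · rw [countPQ hn p q hp2 hq2 hpq, if_neg hpq]
      split_ifs <;> norm_num
  rw [Finset.sum_congr rfl (fun p hp => Finset.sum_congr rfl (fun q hq => by
    rw [hsplit p hp q hq]))]
  have hexp : ∀ (c : ℝ) (p q : Finset (Fin n)), zF H p * zF H q *
      ((if p = q then c else 0) + (if (p ∩ q).card = 1 then (1:ℝ) else 0))
      = zF H p * zF H q * (if p = q then c else 0)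
        + zF H p * zF H q * (if (p ∩ q).card = 1 then (1:ℝ) else 0) := by
    intro c p q; ring
  simp_rw [hexp ((n - 2 : ℕ) : ℝ), Finset.sum_add_distrib]
  rw [diag_sum]
  -- second piece: S_one = 4Y - 2Z via Wlem
  have hcsplit : ∀ p ∈ Finset.powersetCard 2 (univ : Finset (Fin n)),
      ∀ q ∈ Finset.powersetCard 2 (univ : Finset (Fin n)),
      (((p ∩ q).card : ℕ) : ℝ)
      = (if p = q then (2:ℝ) else 0) + (if (p ∩ q).card = 1 then (1:ℝ) else 0) := by
    intro p hp q hq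
    have hp2 : p.card = 2 := (Finset.mem_powersetCard.1 hp).2
    have hq2 : q.card = 2 := (Finset.mem_powersetCard.1 hq).2
    by_cases hpq : p = q
    · subst hpq
      rw [Finset.inter_self, hp2, if_pos rfl, if_neg (by omega)]
      norm_num
    · have hile : (p ∩ q).card ≤ 2 := hp2 ▸ Finset.card_le_card inter_subset_left
      have hne2 : (p ∩ q).card ≠ 2 := by
        intro h2
        have e1 : p ∩ q = p := Finset.eq_of_subset_of_card_le inter_subset_left (by omega)
        have e2 : p ∩ q = q := Finset.eq_of_subset_of_card_le inter_subset_right (by omega)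
        exact hpq (e1 ▸ e2)
      rw [if_neg hpq]
      interval_cases h : (p ∩ q).card <;> simp_all
  have hW := Wlem H hcard
  rw [Finset.sum_congr rfl (fun p hp => Finset.sum_congr rfl (fun q hq => by
    rw [hcsplit p hp q hq]))] at hW
  simp_rw [hexp 2, Finset.sum_add_distrib] at hW
  rw [diag_sum] at hW
  simp_rw [← sq]
  linarith [hW]

lemma sum_ys_sq (hn : 7 ≤ n) (hcard : ∀ e ∈ H, e.card = 3) :
    ∑ e ∈ Finset.powersetCard 3 (univ : Finset (Fin n)), (ysF H e)^2
      = ((n - 2 : ℕ) : ℝ) * ((3 * H.card) * (3 * H.card))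
        + ((((n-1).choose 2 : ℕ) : ℝ) - ((n - 2 : ℕ) : ℝ)) * ∑ v : Fin n, (yF H v)^2 := by
  have hsy := ysumF H hcard
  unfold ysF
  simp_rw [sq, Finset.sum_mul_sum]
  rw [← sum_comm3]
  have hre : ∀ (v w : Fin n) (e : Finset (Fin n)),
      ((if v ∈ e then (1:ℝ) else 0) * yF H v) * ((if w ∈ e then (1:ℝ) else 0) * yF H w)
      = yF H v * yF H w * ((if v ∈ e then (1:ℝ) else 0) * (if w ∈ e then 1 else 0)) := by
    intro v w e; ring
  simp_rw [hre, mulind, ← Finset.mul_sum, Finset.sum_boole]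
  have hsplit : ∀ v w : Fin n,
      ((((Finset.powersetCard 3 (univ : Finset (Fin n))).filter
          (fun e => v ∈ e ∧ w ∈ e)).card : ℕ) : ℝ)
      = ((n - 2 : ℕ) : ℝ)
        + (if v = w then (((n-1).choose 2 : ℕ) : ℝ) - ((n - 2 : ℕ) : ℝ) else 0) := by
    intro v w
    by_cases hvw : v = w
    · subst hvw
      have : ((Finset.powersetCard 3 (univ : Finset (Fin n))).filter (fun e => v ∈ e ∧ v ∈ e))
          = ((Finset.powersetCard 3 (univ : Finset (Fin n))).filter (fun e => v ∈ e)) := by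
        apply Finset.filter_congr; intro e _; simp
      rw [this, countV1 v hn, if_pos rfl]
      ring
    · rw [count_two_pc univ v w (mem_univ v) (mem_univ w) hvw, card_univ_fin, if_neg hvw]
      ring
  simp_rw [hsplit]
  have hexp : ∀ v w : Fin n, yF H v * yF H w *
      (((n - 2 : ℕ) : ℝ) + (if v = w then (((n-1).choose 2 : ℕ) : ℝ) - ((n - 2 : ℕ) : ℝ) else 0))
      = yF H v * yF H w * ((n - 2 : ℕ) : ℝ)
        + yF H v * yF H w * (if v = w then (((n-1).choose 2 : ℕ) : ℝ) - ((n - 2 : ℕ) : ℝ) else 0) := by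
    intro v w; ring
  simp_rw [hexp, Finset.sum_add_distrib]
  rw [diag_sum]
  have hprod : ∑ v : Fin n, ∑ w : Fin n, yF H v * yF H w * ((n - 2 : ℕ) : ℝ)
      = (∑ v : Fin n, yF H v) * (∑ w : Fin n, yF H w) * ((n - 2 : ℕ) : ℝ) := by
    rw [Finset.sum_mul_sum, Finset.sum_mul]
    exact Finset.sum_congr rfl fun v _ => (Finset.sum_mul _ _ _).symm
  rw [hprod, hsy]
  simp_rw [← sq]
  ring

lemma sum_ys_zs (hn : 7 ≤ n) (hcard : ∀ e ∈ H, e.card = 3) :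
    ∑ e ∈ Finset.powersetCard 3 (univ : Finset (Fin n)), ysF H e * zsF H e
      = (3 * H.card) * (3 * H.card)
        + (((n - 2 : ℕ) : ℝ) - 1) * (2 * ∑ v : Fin n, (yF H v)^2) := by
  have hsy := ysumF H hcard
  have hsz := zsumF H hcard
  unfold ysF zsF
  simp_rw [Finset.sum_mul_sum]
  rw [← sum_comm3]
  have hre : ∀ (v : Fin n) (p e : Finset (Fin n)),
      ((if v ∈ e then (1:ℝ) else 0) * yF H v) * ((if p ⊆ e then (1:ℝ) else 0) * zF H p)
      = yF H v * zF H p * ((if v ∈ e then (1:ℝ) else 0) * (if p ⊆ e then 1 else 0)) := by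
    intro v p e; ring
  simp_rw [hre, mulind, ← Finset.mul_sum, Finset.sum_boole]
  have hsplit : ∀ (v : Fin n), ∀ p ∈ Finset.powersetCard 2 (univ : Finset (Fin n)),
      ((((Finset.powersetCard 3 (univ : Finset (Fin n))).filter
          (fun e => v ∈ e ∧ p ⊆ e)).card : ℕ) : ℝ)
      = 1 + (if v ∈ p then ((n - 2 : ℕ) : ℝ) - 1 else 0) := by
    intro v p hp
    rw [countVP hn v p (Finset.mem_powersetCard.1 hp).2]
    split_ifs with h
    · simp
    · simp
  rw [Finset.sum_congr rfl (fun v _ => Finset.sum_congr rfl (fun p hp => by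
    rw [hsplit v p hp]))]
  have hexp : ∀ (v : Fin n) (p : Finset (Fin n)), yF H v * zF H p *
      (1 + (if v ∈ p then ((n - 2 : ℕ) : ℝ) - 1 else 0))
      = yF H v * zF H p
        + (yF H v * (((n - 2 : ℕ) : ℝ) - 1)) * ((if v ∈ p then (1:ℝ) else 0) * zF H p) := by
    intro v p; split_ifs <;> ring
  simp_rw [hexp, Finset.sum_add_distrib, ← Finset.mul_sum]
  have hK : ∀ v : Fin n, ∑ p ∈ Finset.powersetCard 2 (univ : Finset (Fin n)),
      (if v ∈ p then (1:ℝ) else 0) * zF H p = 2 * yF H v := fun v => K6 H hcard v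
  simp_rw [hK]
  rw [← Finset.sum_mul, hsy, hsz]
  have : ∀ v : Fin n, yF H v * (((n - 2 : ℕ) : ℝ) - 1) * (2 * yF H v)
      = (((n - 2 : ℕ) : ℝ) - 1) * 2 * (yF H v)^2 := by
    intro v; ring
  simp_rw [this, ← Finset.mul_sum]
  ring

lemma choose3_cast (hn : 7 ≤ n) : ((n.choose 3 : ℕ) : ℝ)
    = (n:ℝ) * ((n:ℝ) - 1) * ((n:ℝ) - 2) / 6 := by
  obtain ⟨k, rfl⟩ : ∃ k, n = k + 1 := ⟨n - 1, by omega⟩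
  have h := Nat.add_one_mul_choose_eq k 2
  have h2 : ((k.choose 2 : ℕ) : ℝ) = (k:ℝ) * ((k:ℝ) - 1) / 2 := Nat.cast_choose_two ℝ k
  have h3 : (((k+1) * k.choose 2 : ℕ) : ℝ) = (((k+1).choose 3 * 3 : ℕ) : ℝ) := by
    exact_mod_cast congrArg (Nat.cast : ℕ → ℝ) h
  push_cast at h3
  push_cast
  rw [h2] at h3
  have hk : (7:ℝ) ≤ (k:ℝ) + 1 := by exact_mod_cast hn
  nlinarith [h3]

set_option maxHeartbeats 4000000 in
theorem key_ineq (hn : 7 ≤ n) (hcard : ∀ e ∈ H, e.card = 3) :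
    ((((H ×ˢ H).filter (fun q : Finset (Fin n) × Finset (Fin n) =>
        (q.1 ∩ q.2).card = 1)).card : ℝ))
      + (2*(n:ℝ) - 11) * (H.card : ℝ)
      - (3*(n:ℝ) - 14) * ((n:ℝ) - 1) / 2 * (H.card : ℝ)^2 / ((n.choose 3 : ℕ) : ℝ) ≥ 0 := by
  set ν : ℝ := (n:ℝ) with hν
  have hν7 : (7:ℝ) ≤ ν := by rw [hν]; exact_mod_cast hn
  set m : ℝ := (H.card : ℝ) with hm
  set Y : ℝ := ∑ v : Fin n, (yF H v)^2 with hYdef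
  set Z : ℝ := ∑ p ∈ Finset.powersetCard 2 (univ : Finset (Fin n)), (zF H p)^2 with hZdef
  set P1 : ℝ := (((H ×ˢ H).filter (fun q : Finset (Fin n) × Finset (Fin n) =>
      (q.1 ∩ q.2).card = 1)).card : ℝ) with hP1def
  set P2 : ℝ := (((H ×ˢ H).filter (fun q : Finset (Fin n) × Finset (Fin n) =>
      (q.1 ∩ q.2).card = 2)).card : ℝ) with hP2def
  -- relation Y
  have hY : Y = 3*m + 2*P2 + P1 := by
    have h1 := fiber_sum H hcard (fun k => (k:ℝ))
    rw [← Ylem H] at h1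
    rw [hYdef, h1]
    norm_num
    ring
  -- relation Z
  have hZ : Z = 3*m + P2 := by
    have h1 := fiber_sum H hcard (fun k => ((k.choose 2 : ℕ) : ℝ))
    rw [← Zlem H] at h1
    rw [hZdef, h1]
    rw [show Nat.choose 0 2 = 0 from rfl, show Nat.choose 1 2 = 0 from rfl,
      show Nat.choose 2 2 = 1 from rfl, show Nat.choose 3 2 = 3 from rfl]
    norm_num
    ring
  -- casts
  have hn2 : ((n - 2 : ℕ) : ℝ) = ν - 2 := by
    rw [Nat.cast_sub (by omega)]; norm_num [hν]
  have hC2 : (((n-1).choose 2 : ℕ) : ℝ) = (ν - 1) * (ν - 2) / 2 := by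
    rw [Nat.cast_choose_two, Nat.cast_sub (by omega)]
    norm_num
    ring
  have hN3 : ((n.choose 3 : ℕ) : ℝ) = ν * (ν - 1) * (ν - 2) / 6 := choose3_cast hn
  -- the coefficients
  set A : ℝ := 1 / (ν - 4) with hA
  set B : ℝ := 2 / ((ν - 3) * (ν - 4)) with hB
  set r : ℝ := 6 / ((ν - 2) * (ν - 3) * (ν - 4)) with hr
  set c : ℝ := -(3 * m / ν) with hc
  -- G
  set G : ℝ := ∑ v : Fin n, (yF H v + c)^2 with hGdef
  have hGpos : 0 ≤ G := Finset.sum_nonneg fun v _ => sq_nonneg _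
  have hG : G = Y + (2*c) * (3*m) + ν * c^2 := by
    have hexpg : ∀ v : Fin n, (yF H v + c)^2 = (yF H v)^2 + (2*c) * yF H v + c^2 :=
      fun v => by ring
    rw [hGdef]
    simp_rw [hexpg, Finset.sum_add_distrib, ← Finset.mul_sum]
    rw [ysumF H hcard, Finset.sum_const, card_univ, Fintype.card_fin, nsmul_eq_mul]
  -- F
  set F : ℝ := ∑ e ∈ Finset.powersetCard 3 (univ : Finset (Fin n)),
    (xF H e + (-A) * zsF H e + B * ysF H e + (-(r*m)))^2 with hFdef
  have hFpos : 0 ≤ F := Finset.sum_nonneg fun e _ => sq_nonneg _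
  have hxsq : ∀ e : Finset (Fin n), (xF H e)^2 = xF H e := by
    intro e; unfold xF; split_ifs <;> norm_num
  have hF : F = m + A^2 * (((n - 2 : ℕ) : ℝ) * Z + (4*Y - 2*Z))
      + B^2 * (((n - 2 : ℕ) : ℝ) * ((3*m) * (3*m)) + ((((n-1).choose 2 : ℕ) : ℝ) - ((n - 2 : ℕ) : ℝ)) * Y)
      + ((n.choose 3 : ℕ) : ℝ) * (r*m)^2
      + (-2*A) * Z + (2*B) * Y + (-2*(r*m)) * m
      + (-2*A*B) * ((3*m) * (3*m) + (((n - 2 : ℕ) : ℝ) - 1) * (2*Y))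
      + (2*A*(r*m)) * (((n - 2 : ℕ) : ℝ) * (3*m)) + (-2*B*(r*m)) * ((((n-1).choose 2 : ℕ) : ℝ) * (3*m)) := by
    have hexpf : ∀ e : Finset (Fin n),
        (xF H e + (-A) * zsF H e + B * ysF H e + (-(r*m)))^2
        = (xF H e)^2 + A^2 * (zsF H e)^2 + B^2 * (ysF H e)^2 + (r*m)^2
          + (-2*A) * (xF H e * zsF H e) + (2*B) * (xF H e * ysF H e)
          + (-2*(r*m)) * xF H e + (-2*A*B) * (ysF H e * zsF H e)
          + (2*A*(r*m)) * zsF H e + (-2*B*(r*m)) * ysF H e := fun e => by ring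
    rw [hFdef]
    simp_rw [hexpf, hxsq, Finset.sum_add_distrib, ← Finset.mul_sum]
    rw [sum_xF H hcard, sum_zs_sq H hn hcard, sum_ys_sq H hn hcard,
      Finset.sum_const, card_powersetCard, card_univ_fin, nsmul_eq_mul,
      sum_x_zs H hcard, sum_x_ys H hcard, sum_ys_zs H hn hcard,
      sum_zs H hn hcard, sum_ys H hn hcard]
  -- combine
  have h1 : ν - 1 ≠ 0 := by linarith
  have h2 : ν - 2 ≠ 0 := by linarith
  have h3 : ν - 3 ≠ 0 := by linarith
  have h4 : ν - 4 ≠ 0 := by linarith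
  have h0 : ν ≠ 0 := by linarith
  have hcomb : P1 + (2*ν - 11) * m - (3*ν - 14) * (ν - 1) / 2 * m^2 / ((n.choose 3 : ℕ) : ℝ)
      = ((ν - 7)/(ν - 3)) * G + (2*ν - 8) * F := by
    rw [hG, hF, hY, hZ, hn2, hC2, hN3, hA, hB, hr, hc]
    field_simp
    ring
  have hcoef1 : 0 ≤ (ν - 7)/(ν - 3) := by
    apply div_nonneg <;> linarith
  have hcoef2 : 0 ≤ 2*ν - 8 := by linarith
  have : 0 ≤ ((ν - 7)/(ν - 3)) * G + (2*ν - 8) * F :=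
    add_nonneg (mul_nonneg hcoef1 hGpos) (mul_nonneg hcoef2 hFpos)
  linarith [hcomb ▸ this]
end

open Finset in
/-- Spectral supersaturation for 3-uniform hypergraphs: the number of unordered pairs
of distinct edges sharing exactly one vertex is at least
`(1/2)(3(n-3)(n-4)/2 · m²/C(n,3) - (2n-11)(m - m²/C(n,3)))` for `n ≥ 7`. -/
theorem hypergraph_unit_intersections (n : ℕ) (hn : 7 ≤ n)
    (H : Finset (Finset (Fin n))) (hcard : ∀ e ∈ H, e.card = 3)
    (m : ℕ) (hm : H.card = m) :
    (((H ×ˢ H).filter (fun p : Finset (Fin n) × Finset (Fin n) =>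
        (p.1 ∩ p.2).card = 1)).card : ℝ) / 2 ≥
      (1 / 2) * (3 * ((n : ℝ) - 3) * ((n : ℝ) - 4) / 2 * (m : ℝ) ^ 2 / (n.choose 3 : ℝ)
        - (2 * (n : ℝ) - 11) * ((m : ℝ) - (m : ℝ) ^ 2 / (n.choose 3 : ℝ))) := by
  subst hm
  have hk := key_ineq H hn hcard
  rw [ge_iff_le, ← sub_nonneg]
  have heq : (((H ×ˢ H).filter (fun p : Finset (Fin n) × Finset (Fin n) =>
        (p.1 ∩ p.2).card = 1)).card : ℝ) / 2
      - (1 / 2) * (3 * ((n : ℝ) - 3) * ((n : ℝ) - 4) / 2 * (H.card : ℝ) ^ 2 / (n.choose 3 : ℝ)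
        - (2 * (n : ℝ) - 11) * ((H.card : ℝ) - (H.card : ℝ) ^ 2 / (n.choose 3 : ℝ)))
      = (1/2) * ((((H ×ˢ H).filter (fun q : Finset (Fin n) × Finset (Fin n) =>
          (q.1 ∩ q.2).card = 1)).card : ℝ)
        + (2*(n:ℝ) - 11) * (H.card : ℝ)
        - (3*(n:ℝ) - 14) * ((n:ℝ) - 1) / 2 * (H.card : ℝ)^2 / ((n.choose 3 : ℕ) : ℝ)) := by
    ring
  rw [heq]
  linarith [hk]
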